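/- Let w ≥ 4, fix integers n > m ≥ 1, and let 0 ≤ s ≤ t be integers with 2^t ≤ w−2. Let x : ℤ → F₂^w be a sequence satisfying x_{k+n} = x_{k+m} + x_{k+1}·B + x_k·C for all k ∈ ℤ, and let i ∈ ℤ. Then the repetitions x_{i+2^k(m-1)} = x_{i+2^k(n-1)} hold simultaneously for all k with s ≤ k ≤ t if and only if x_i·B^{2^k} + x_{i-1}·Q_{2^k} = 0 for all k with s ≤ k ≤ t. -/
import Mathlib


open Matrix

/-- The matrix `B` of MT-type recursions: first row zero, row `i` (0-indexed,
`1 ≤ i ≤ w-2`) is the standard basis row vector with a `1` in column `i+1`,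
and the last row is `(a_{w-1}, …, a_0)` (stored as `a 0, …, a (w-1)`). -/
def mtB (w : ℕ) (a : Fin w → ZMod 2) : Matrix (Fin w) (Fin w) (ZMod 2) :=
  Matrix.of fun i j =>
    if (i : ℕ) = w - 1 then a j
    else if 1 ≤ (i : ℕ) ∧ (j : ℕ) = (i : ℕ) + 1 then 1 else 0

/-- The matrix `C`: its only nonzero entry is a `1` in position `(1,2)` (1-indexed). -/
def mtC (w : ℕ) : Matrix (Fin w) (Fin w) (ZMod 2) :=
  Matrix.of fun i j => if (i : ℕ) = 0 ∧ (j : ℕ) = 1 then 1 else 0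

/-- `Q_k = Σ_{i=0}^{k-1} B^i · C · B^{k-1-i}`. -/
def mtQ (w : ℕ) (a : Fin w → ZMod 2) (k : ℕ) : Matrix (Fin w) (Fin w) (ZMod 2) :=
  ∑ i ∈ Finset.range k, (mtB w a) ^ i * mtC w * (mtB w a) ^ (k - 1 - i)

lemma zmod2_add_self (c : ZMod 2) : c + c = 0 := by
  have h : ∀ d : ZMod 2, d + d = 0 := by decide
  exact h c

lemma mt_row1 {w : ℕ} (hw : 4 ≤ w) (a : Fin w → ZMod 2) :
    ∀ r, r ≤ w - 2 → ∀ j : Fin w,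
      (mtB w a ^ r) ⟨1, by omega⟩ j = if (j : ℕ) = 1 + r then 1 else 0 := by
  intro r
  induction r with
  | zero =>
    intro _ j
    simp [Matrix.one_apply, Fin.ext_iff, eq_comm]
  | succ r ih =>
    intro hr j
    rw [pow_succ, Matrix.mul_apply]
    have h1r : 1 + r < w := by omega
    rw [Finset.sum_eq_single (⟨1 + r, h1r⟩ : Fin w)]
    · rw [ih (by omega)]
      simp only [if_pos rfl, one_mul, mtB, Matrix.of_apply]
      have hne : ¬ (1 + r = w - 1) := by omega
      rw [if_neg hne]
      split_ifs with h1 h2 h3 <;> first | rfl | omega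
    · intro b _ hb
      rw [ih (by omega), if_neg, zero_mul]
      intro hb'
      exact hb (Fin.ext (by simpa using hb'))
    · intro h; exact absurd (Finset.mem_univ _) h

lemma mt_cbc {w : ℕ} (hw : 4 ≤ w) (a : Fin w → ZMod 2) {r : ℕ} (hr : r ≤ w - 2) :
    mtC w * mtB w a ^ r * mtC w = 0 := by
  ext p q
  rw [Matrix.mul_apply, Matrix.zero_apply]
  apply Finset.sum_eq_zero
  intro v _
  by_cases hv : (v : ℕ) = 0 ∧ (q : ℕ) = 1
  · suffices h : (mtC w * mtB w a ^ r) p v = 0 by rw [h, zero_mul]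
    rw [Matrix.mul_apply]
    apply Finset.sum_eq_zero
    intro u _
    by_cases hu : (p : ℕ) = 0 ∧ (u : ℕ) = 1
    · have hu1 : u = ⟨1, by omega⟩ := Fin.ext (by simp [hu.2])
      rw [hu1, mt_row1 hw a r hr v, if_neg (by omega), mul_zero]
    · simp [mtC, hu]
  · simp [mtC, hv]

lemma mt_qq {w : ℕ} (hw : 4 ≤ w) (a : Fin w → ZMod 2) {j : ℕ} (hj : 1 ≤ j)
    (h2 : 2 * j ≤ w) : mtQ w a j * mtQ w a j = 0 := by
  unfold mtQ
  rw [Finset.sum_mul_sum]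
  apply Finset.sum_eq_zero
  intro b hb
  apply Finset.sum_eq_zero
  intro c hc
  simp only [Finset.mem_range] at hb hc
  have key : mtC w * mtB w a ^ (j - 1 - b + c) * mtC w = 0 := mt_cbc hw a (by omega)
  calc (mtB w a ^ b * mtC w * mtB w a ^ (j - 1 - b)) *
        (mtB w a ^ c * mtC w * mtB w a ^ (j - 1 - c))
      = mtB w a ^ b * (mtC w * mtB w a ^ (j - 1 - b + c) * mtC w) * mtB w a ^ (j - 1 - c) := by
        simp only [pow_add, mul_assoc]
    _ = 0 := by rw [key, mul_zero, zero_mul]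

lemma mt_qdouble {w : ℕ} (a : Fin w → ZMod 2) (j : ℕ) :
    mtQ w a (2 * j) = mtB w a ^ j * mtQ w a j + mtQ w a j * mtB w a ^ j := by
  unfold mtQ
  rw [Finset.mul_sum, Finset.sum_mul, two_mul, Finset.sum_range_add, add_comm]
  congr 1
  · refine Finset.sum_congr rfl fun i hi => ?_
    simp only [Finset.mem_range] at hi
    rw [show j + j - 1 - (j + i) = j - 1 - i by omega, pow_add]
    simp only [mul_assoc]
  · refine Finset.sum_congr rfl fun i hi => ?_
    simp only [Finset.mem_range] at hi
    rw [show j + j - 1 - i = (j - 1 - i) + j by omega, pow_add]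
    simp only [mul_assoc]

lemma mt_combine {w : ℕ} (A D T P1 P2 R1 R2 xi xi1 xi2 : Fin w → ZMod 2)
    (Bj Qj B2 Q2 : Matrix (Fin w) (Fin w) (ZMod 2))
    (e1 : A + T = P1 ᵥ* Bj + R1 ᵥ* Qj)
    (e2 : T + D = P2 ᵥ* Bj + R2 ᵥ* Qj)
    (e3 : P1 + P2 = xi ᵥ* Bj + xi1 ᵥ* Qj)
    (e4 : R1 + R2 = xi1 ᵥ* Bj + xi2 ᵥ* Qj)
    (hBB : Bj * Bj = B2) (hQ2 : Bj * Qj + Qj * Bj = Q2) (hQQ : Qj * Qj = 0) :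
    A + D = xi ᵥ* B2 + xi1 ᵥ* Q2 := by
  subst hBB hQ2
  calc A + D = (A + T) + (T + D) := by
        funext jj
        simp only [Pi.add_apply]
        have h := zmod2_add_self (T jj)
        linear_combination -h
    _ = (P1 ᵥ* Bj + R1 ᵥ* Qj) + (P2 ᵥ* Bj + R2 ᵥ* Qj) := by rw [e1, e2]
    _ = (P1 + P2) ᵥ* Bj + (R1 + R2) ᵥ* Qj := by
        rw [Matrix.add_vecMul, Matrix.add_vecMul]; abel
    _ = (xi ᵥ* Bj + xi1 ᵥ* Qj) ᵥ* Bj + (xi1 ᵥ* Bj + xi2 ᵥ* Qj) ᵥ* Qj := by rw [e3, e4]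
    _ = xi ᵥ* (Bj * Bj) + xi1 ᵥ* (Qj * Bj) + (xi1 ᵥ* (Bj * Qj) + xi2 ᵥ* (Qj * Qj)) := by
        rw [Matrix.add_vecMul, Matrix.add_vecMul, Matrix.vecMul_vecMul,
          Matrix.vecMul_vecMul, Matrix.vecMul_vecMul, Matrix.vecMul_vecMul]
    _ = xi ᵥ* (Bj * Bj) + xi1 ᵥ* (Bj * Qj + Qj * Bj) := by
        rw [hQQ, Matrix.vecMul_zero, add_zero, Matrix.vecMul_add]; abel

lemma mt_key {w : ℕ} (hw : 4 ≤ w) (a : Fin w → ZMod 2) (n m : ℤ)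
    (x : ℤ → Fin w → ZMod 2)
    (hx : ∀ k : ℤ, x (k + n) = x (k + m) + x (k + 1) ᵥ* mtB w a + x k ᵥ* mtC w)
    (k : ℕ) : 2 ^ k ≤ w - 2 → ∀ i : ℤ,
    x (i + 2 ^ k * (n - 1)) + x (i + 2 ^ k * (m - 1)) =
      x i ᵥ* (mtB w a ^ 2 ^ k) + x (i - 1) ᵥ* mtQ w a (2 ^ k) := by
  induction k with
  | zero =>
    intro _ i
    have h := hx (i - 1)
    rw [show i - 1 + 1 = i by ring] at h
    rw [show i + 2 ^ 0 * (n - 1) = (i - 1) + n by ring,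
      show i + 2 ^ 0 * (m - 1) = (i - 1) + m by ring, h]
    have hQ : mtQ w a (2 ^ 0) = mtC w := by
      simp [mtQ, Finset.sum_range_one]
    rw [hQ, show (2 : ℕ) ^ 0 = 1 from rfl, pow_one]
    funext jj
    simp only [Pi.add_apply]
    have h2 := zmod2_add_self (x (i - 1 + m) jj)
    linear_combination h2
  | succ k ih =>
    intro hk i
    have hpow : (2 : ℕ) ^ (k + 1) = 2 ^ k + 2 ^ k := by rw [pow_succ, mul_two]
    have hk' : 2 ^ k ≤ w - 2 := by omega
    have e1 := ih hk' (i + 2 ^ k * (n - 1))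
    have e2 := ih hk' (i + 2 ^ k * (m - 1))
    have e3 := ih hk' i
    have e4 := ih hk' (i - 1)
    rw [show i + 2 ^ k * (n - 1) + 2 ^ k * (n - 1) = i + 2 ^ (k + 1) * (n - 1) by ring] at e1
    rw [show i + 2 ^ k * (m - 1) + 2 ^ k * (n - 1) = i + 2 ^ k * (n - 1) + 2 ^ k * (m - 1) by ring,
      show i + 2 ^ k * (m - 1) + 2 ^ k * (m - 1) = i + 2 ^ (k + 1) * (m - 1) by ring] at e2
    rw [show i - 1 + 2 ^ k * (n - 1) = i + 2 ^ k * (n - 1) - 1 by ring,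
      show i - 1 + 2 ^ k * (m - 1) = i + 2 ^ k * (m - 1) - 1 by ring] at e4
    have hBB : mtB w a ^ 2 ^ k * mtB w a ^ 2 ^ k = mtB w a ^ 2 ^ (k + 1) := by
      rw [← pow_add, ← hpow]
    have hQ2 : mtB w a ^ 2 ^ k * mtQ w a (2 ^ k) + mtQ w a (2 ^ k) * mtB w a ^ 2 ^ k
        = mtQ w a (2 ^ (k + 1)) := by
      rw [show (2 : ℕ) ^ (k + 1) = 2 * 2 ^ k by rw [pow_succ, mul_comm], mt_qdouble]
    have hQQ : mtQ w a (2 ^ k) * mtQ w a (2 ^ k) = 0 :=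
      mt_qq hw a (Nat.one_le_two_pow) (by omega)
    exact mt_combine _ _ _ _ _ _ _ _ _ _ _ _ _ _ e1 e2 e3 e4 hBB hQ2 hQQ

/-- simultaneous repetitions for `s ≤ k ≤ t` are equivalent to
the simultaneous linear conditions `x_i·B^{2^k} + x_{i-1}·Q_{2^k} = 0`. -/
theorem stmt14 (w : ℕ) (hw : 4 ≤ w) (a : Fin w → ZMod 2) (n m : ℤ)
    (hm : 1 ≤ m) (hmn : m < n) (s t : ℕ) (hst : s ≤ t) (ht : 2 ^ t ≤ w - 2)
    (x : ℤ → Fin w → ZMod 2)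
    (hx : ∀ k : ℤ, x (k + n) = x (k + m) + x (k + 1) ᵥ* mtB w a + x k ᵥ* mtC w)
    (i : ℤ) :
    (∀ k : ℕ, s ≤ k → k ≤ t → x (i + 2 ^ k * (m - 1)) = x (i + 2 ^ k * (n - 1))) ↔
    (∀ k : ℕ, s ≤ k → k ≤ t →
      x i ᵥ* (mtB w a) ^ (2 ^ k) + x (i - 1) ᵥ* mtQ w a (2 ^ k) = 0) := by
  have hkey : ∀ k : ℕ, k ≤ t →
      x (i + 2 ^ k * (n - 1)) + x (i + 2 ^ k * (m - 1)) =
        x i ᵥ* (mtB w a ^ 2 ^ k) + x (i - 1) ᵥ* mtQ w a (2 ^ k) := fun k hkt =>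
    mt_key hw a n m x hx k
      (le_trans (Nat.pow_le_pow_right (by norm_num) hkt) ht) i
  constructor
  · intro h k hs hkt
    rw [← hkey k hkt, h k hs hkt]
    funext jj
    simp only [Pi.add_apply]
    exact zmod2_add_self _
  · intro h k hs hkt
    have h0 := hkey k hkt
    rw [h k hs hkt] at h0
    funext jj
    have h1 := congrFun h0 jj
    simp only [Pi.add_apply, Pi.zero_apply] at h1
    have h2 := zmod2_add_self (x (i + 2 ^ k * (n - 1)) jj)
    linear_combination h1 - h2
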